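/- Let k be a division ring and n ≥ 2. Suppose M is an invertible n×n matrix over k such that x ↦ xM maps every left k-subspace of k^n to a left k-subspace and every right k-subspace to a right k-subspace (rows of k^n). Then M = aM' for some nonzero a ∈ k and some invertible matrix M' with all entries in the center Z(k). -/

import Mathlib

open Matrix MulOpposite


/-- If an invertible matrix `M` over `k` is such that `x ↦ xM` takes left subspaces to
left subspaces and right subspaces to right subspaces of `k^n` (`n ≥ 2`), then
`M = a M'` with `a ≠ 0` and `M'` an invertible matrix over the center of `k`. -/
theorem stmt_18 {k : Type*} [DivisionRing k] {n : ℕ} (hn : 2 ≤ n)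
    (M : Matrix (Fin n) (Fin n) k) (hM : IsUnit M)
    (hleft : ∀ S : Submodule k (Fin n → k), ∃ T : Submodule k (Fin n → k),
      (fun x : Fin n → k => Matrix.vecMul x M) '' (S : Set (Fin n → k))
        = (T : Set (Fin n → k)))
    (hright : ∀ S : Submodule kᵐᵒᵖ (Fin n → k), ∃ T : Submodule kᵐᵒᵖ (Fin n → k),
      (fun x : Fin n → k => Matrix.vecMul x M) '' (S : Set (Fin n → k))
        = (T : Set (Fin n → k))) :
    ∃ (a : k) (M' : Matrix (Fin n) (Fin n) k), a ≠ 0 ∧ IsUnit M' ∧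
      (∀ i j, M' i j ∈ Subring.center k) ∧ M = a • M' := by
  classical
  obtain ⟨u, hu⟩ := hM
  set i0 : Fin n := ⟨0, by omega⟩ with hi0
  -- injectivity of x ↦ x ᵥ* M
  have hinj : Function.Injective (fun x : Fin n → k => Matrix.vecMul x M) := by
    intro x y hxy
    have h : ∀ z : Fin n → k, Matrix.vecMul (Matrix.vecMul z M) u.inv = z := by
      intro z
      rw [Matrix.vecMul_vecMul, ← hu, u.val_inv, Matrix.vecMul_one]
    calc x = Matrix.vecMul (Matrix.vecMul x M) u.inv := (h x).symm
      _ = Matrix.vecMul (Matrix.vecMul y M) u.inv := by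
          simp only at hxy; rw [hxy]
      _ = y := h y
  -- key extraction from hright for 0/1 vectors
  have key : ∀ v : Fin n → k, (∀ j, v j = 0 ∨ v j = 1) →
      ∀ d : k, ∃ c : k, ∀ j, c * (v ᵥ* M) j = (v ᵥ* M) j * d := by
    intro v hv d
    obtain ⟨T, hT⟩ := hright (Submodule.span kᵐᵒᵖ {v})
    have h1 : v ᵥ* M ∈ (T : Set (Fin n → k)) := by
      rw [← hT]
      exact ⟨v, Submodule.mem_span_singleton_self v, rfl⟩
    have h2 : (op d) • (v ᵥ* M) ∈ (T : Set (Fin n → k)) := T.smul_mem _ h1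
    rw [← hT] at h2
    obtain ⟨w, hw, hw2⟩ := h2
    rw [SetLike.mem_coe, Submodule.mem_span_singleton] at hw
    obtain ⟨a, rfl⟩ := hw
    refine ⟨a.unop, fun j => ?_⟩
    have hav : a • v = a.unop • v := by
      ext j
      have e1 : (a • v) j = v j * unop a := rfl
      have e2 : (a.unop • v) j = unop a * v j := rfl
      rcases hv j with h | h <;> rw [e1, e2, h] <;> simp
    simp only at hw2
    rw [hav, Matrix.smul_vecMul] at hw2
    exact congrFun hw2 j
  -- rows are nonzero
  have hrowne : ∀ i : Fin n, ∃ j, M i j ≠ 0 := by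
    intro i
    by_contra h
    push_neg at h
    have heq : (Pi.single i 1 : Fin n → k) ᵥ* M = (0 : Fin n → k) ᵥ* M := by
      rw [Matrix.single_one_vecMul, Matrix.zero_vecMul]
      ext j; exact h j
    have := hinj heq
    simpa using congrFun this i
  choose jj hjj using hrowne
  set b : Fin n → k := fun i => M i (jj i) with hb
  -- for each i and d, the conjugation identity
  have conj : ∀ (i : Fin n) (d : k) (j : Fin n),
      (b i * d * (b i)⁻¹) * M i j = M i j * d := by
    intro i d j
    obtain ⟨c, hc⟩ := key (Pi.single i 1)
      (fun j => by rcases eq_or_ne j i with h | h <;> simp [Pi.single_apply, h]) d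
    simp only [Matrix.single_one_vecMul] at hc
    have hcb : c * b i = b i * d := hc (jj i)
    have hceq : c = b i * d * (b i)⁻¹ := by
      rw [← hcb, mul_assoc, mul_inv_cancel₀ (hjj i), mul_one]
    rw [← hceq]; exact hc j
  -- independence of rows
  have hindep : ∀ (i i' : Fin n), i ≠ i' → ∀ c d : k,
      (∀ j, c * M i j + d * M i' j = 0) → c = 0 ∧ d = 0 := by
    intro i i' hii c d h
    have heq : (Pi.single i c + Pi.single i' d : Fin n → k) ᵥ* M
        = (0 : Fin n → k) ᵥ* M := by
      rw [Matrix.add_vecMul, Matrix.single_vecMul, Matrix.single_vecMul,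
        Matrix.zero_vecMul]
      ext j
      exact h j
    have h0 := hinj heq
    constructor
    · simpa [Pi.single_apply, hii] using congrFun h0 i
    · simpa [Pi.single_apply, hii.symm] using congrFun h0 i'
  -- conjugations by b i agree with b i0
  have hconj_eq : ∀ (i : Fin n) (d : k),
      b i * d * (b i)⁻¹ = b i0 * d * (b i0)⁻¹ := by
    intro i d
    rcases eq_or_ne i i0 with rfl | hi
    · rfl
    obtain ⟨c, hc⟩ := key (Pi.single i0 1 + Pi.single i 1) (fun j => by
      rcases eq_or_ne j i0 with h | h
      · subst h; simp [Pi.single_apply, hi.symm]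
      rcases eq_or_ne j i with h2 | h2
      · subst h2; simp [Pi.single_apply, h, hi]
      · simp [Pi.single_apply, h, h2]) d
    simp only [Matrix.add_vecMul, Matrix.single_one_vecMul, Pi.add_apply] at hc
    have hc' : ∀ j, (c - b i0 * d * (b i0)⁻¹) * M i0 j
        + (c - b i * d * (b i)⁻¹) * M i j = 0 := by
      intro j
      have hcj : c * (M i0 j + M i j) = (M i0 j + M i j) * d := hc j
      rw [mul_add, add_mul] at hcj
      rw [sub_mul, sub_mul, conj i0 d j, conj i d j, sub_add_sub_comm, hcj, sub_self]
    obtain ⟨h1, h2⟩ := hindep i0 i (Ne.symm hi) _ _ hc'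
    rw [sub_eq_zero] at h1 h2
    rw [← h1, ← h2]
  have hb0 : b i0 ≠ 0 := hjj i0
  refine ⟨b i0, fun i j => (b i0)⁻¹ * M i j, hb0, ?_, ?_, ?_⟩
  · -- IsUnit
    have h1 : ((b i0)⁻¹ • (1 : Matrix (Fin n) (Fin n) k)) * (b i0 • 1) = 1 := by
      rw [Matrix.smul_mul, Matrix.one_mul, smul_smul, inv_mul_cancel₀ hb0, one_smul]
    have h2 : ((b i0 : k) • (1 : Matrix (Fin n) (Fin n) k)) * ((b i0)⁻¹ • 1) = 1 := by
      rw [Matrix.smul_mul, Matrix.one_mul, smul_smul, mul_inv_cancel₀ hb0, one_smul]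
    have hu1 : IsUnit ((b i0)⁻¹ • (1 : Matrix (Fin n) (Fin n) k)) :=
      ⟨⟨_, _, h1, h2⟩, rfl⟩
    have heq : (fun i j => (b i0)⁻¹ * M i j : Matrix (Fin n) (Fin n) k)
        = ((b i0)⁻¹ • (1 : Matrix (Fin n) (Fin n) k)) * M := by
      ext i j
      rw [Matrix.smul_mul, Matrix.one_mul]
      rfl
    rw [heq]
    exact hu1.mul ⟨u, hu⟩
  · -- centrality
    intro i j
    rw [Subring.mem_center_iff]
    intro g
    have h1 := conj i g j
    rw [hconj_eq i g] at h1
    have e1 : (b i0)⁻¹ * (b i0 * g * (b i0)⁻¹) = g * (b i0)⁻¹ := by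
      rw [← mul_assoc, ← mul_assoc, inv_mul_cancel₀ hb0, one_mul]
    calc g * ((b i0)⁻¹ * M i j)
        = (g * (b i0)⁻¹) * M i j := by rw [mul_assoc]
      _ = ((b i0)⁻¹ * (b i0 * g * (b i0)⁻¹)) * M i j := by rw [e1]
      _ = (b i0)⁻¹ * ((b i0 * g * (b i0)⁻¹) * M i j) := by rw [mul_assoc]
      _ = (b i0)⁻¹ * (M i j * g) := by rw [h1]
      _ = (b i0)⁻¹ * M i j * g := by rw [mul_assoc]
  · -- M = a • M'
    ext i j
    show M i j = b i0 * ((b i0)⁻¹ * M i j)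
    rw [← mul_assoc, mul_inv_cancel₀ hb0, one_mul]
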